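/- Let λ, μ be partitions, ℓ = ℓ(λ), n ∈ ℤ_{≥0}, η = r_n(λ), and η̃ as in the r_n construction (η̃ = η̄ if n ≤ ℓ−1, η̃ = (λ,1^{n−ℓ+1}) if n ≥ ℓ). Then for all u ∈ ℂ: N_{μ,λ}(u)/N_{μ,η}(qu) = N_{μ,λ̄}(q^{-1}u)/N_{μ,η̃}(u) · (1 − u), as an identity of rational functions in u (equivalently, N_{μ,λ}(u)·N_{μ,η̃}(u) = (1−u)·N_{μ,λ̄}(q^{-1}u)·N_{μ,η}(qu)). -/

import Mathlib

open Finset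

noncomputable section

/-- The `i`-th part (0-indexed) of a partition given as a list of parts. -/
def part (l : List ℕ) (i : ℕ) : ℕ := l.getD i 0

/-- The `j`-th column length (0-indexed), i.e. λ'_{j+1} = #{i : λ_i ≥ j+1}. -/
def conjPart (l : List ℕ) (j : ℕ) : ℕ := (l.filter (fun p => j < p)).length

/-- A list of naturals represents a partition: weakly decreasing with positive parts. -/
def IsPartition (l : List ℕ) : Prop := l.Pairwise (· ≥ ·) ∧ ∀ p ∈ l, 0 < p

/-- The Nekrasov factor N_{λ,μ}(u) =
  ∏_{(i,j)∈λ}(1 - q^{-ℓ_λ(i,j)-a_μ(i,j)-1} u) · ∏_{(i,j)∈μ}(1 - q^{ℓ_μ(i,j)+a_λ(i,j)+1} u),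
  with cells 0-indexed: arm a_μ(i,j) = μ_{i+1} - (j+1), leg ℓ_λ(i,j) = λ'_{j+1} - (i+1). -/
def nek (q u : ℂ) (lam mu : List ℕ) : ℂ :=
  (∏ i ∈ Finset.range lam.length, ∏ j ∈ Finset.range (part lam i),
    (1 - q ^ (-((conjPart lam j : ℤ) - ((i : ℤ) + 1)) - ((part mu i : ℤ) - ((j : ℤ) + 1)) - 1) * u)) *
  (∏ i ∈ Finset.range mu.length, ∏ j ∈ Finset.range (part mu i),
    (1 - q ^ (((conjPart mu j : ℤ) - ((i : ℤ) + 1)) + ((part lam i : ℤ) - ((j : ℤ) + 1)) + 1) * u))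

/-- λ̄ : all parts decreased by 1, zero parts dropped. -/
def bar (l : List ℕ) : List ℕ := (l.map (fun p => p - 1)).filter (fun p => 0 < p)

/-- r_n(λ) = (λ_1+1, …, λ_n+1, λ_{n+2}, λ_{n+3}, …). -/
def rn (n : ℕ) (l : List ℕ) : List ℕ :=
  ((List.range n).map (fun i => part l i + 1)) ++ l.drop (n + 1)

/-- The conjugate (transposed) partition as a list. -/
def conjList (l : List ℕ) : List ℕ :=
  (List.range (part l 0)).map (fun j => conjPart l j)

end

open Polynomial

noncomputable section

/-- Linear factor `1 - q^e c X`. -/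
def fac (q c : ℂ) (e : ℤ) : Polynomial ℂ := 1 - C (q ^ e * c) * X

def nekP (q c : ℂ) (A B : List ℕ) : Polynomial ℂ :=
  (∏ i ∈ Finset.range A.length, ∏ j ∈ Finset.range (part A i),
    fac q c (-((conjPart A j : ℤ) - ((i : ℤ) + 1)) - ((part B i : ℤ) - ((j : ℤ) + 1)) - 1)) *
  (∏ i ∈ Finset.range B.length, ∏ j ∈ Finset.range (part B i),
    fac q c (((conjPart B j : ℤ) - ((i : ℤ) + 1)) + ((part A i : ℤ) - ((j : ℤ) + 1)) + 1))

def NN (q c : ℂ) (mu : List ℕ) (L : ℕ) : Polynomial ℂ :=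
  (∏ i ∈ Finset.range L, fac q c ((L : ℤ) + part mu i - i - 1)) *
    ∏ j ∈ Finset.range (part mu L), fac q c (j : ℤ)

def DD (q c : ℂ) (mu : List ℕ) (L : ℕ) : Polynomial ℂ :=
  ∏ j ∈ Finset.range (part mu L), fac q c ((L : ℤ) + j - conjPart mu j)
end

lemma part_eq_zero {l : List ℕ} {i : ℕ} (h : l.length ≤ i) : part l i = 0 :=
  List.getD_eq_default _ _ h

lemma part_eq_getElem {l : List ℕ} {i : ℕ} (h : i < l.length) : part l i = l[i] :=
  List.getD_eq_getElem _ _ h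

lemma part_antitone {l : List ℕ} (hs : l.Pairwise (· ≥ ·)) {i i' : ℕ} (h : i ≤ i') :
    part l i' ≤ part l i := by
  by_cases hi' : i' < l.length
  · have hi : i < l.length := lt_of_le_of_lt h hi'
    rw [part_eq_getElem hi', part_eq_getElem hi]
    rcases eq_or_lt_of_le h with rfl | hlt
    · exact le_refl _
    · exact List.pairwise_iff_getElem.mp hs i i' hi hi' hlt
  · rw [part_eq_zero (le_of_not_gt hi')]; exact Nat.zero_le _

lemma part_pos {l : List ℕ} (hl : IsPartition l) {i : ℕ} : i < l.length ↔ 0 < part l i := by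
  constructor
  · intro h; rw [part_eq_getElem h]; exact hl.2 _ (List.getElem_mem h)
  · intro h; by_contra hc; rw [part_eq_zero (le_of_not_gt hc)] at h; omega

lemma conjPart_le_length (l : List ℕ) (j : ℕ) : conjPart l j ≤ l.length :=
  List.length_filter_le _ _

lemma part_le_of_forall {a : ℕ} {t : List ℕ} (h : ∀ b ∈ t, b ≤ a) (i : ℕ) : part t i ≤ a := by
  by_cases hi : i < t.length
  · rw [part_eq_getElem hi]; exact h _ (List.getElem_mem hi)
  · rw [part_eq_zero (le_of_not_gt hi)]; exact Nat.zero_le _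

lemma lt_part_iff {l : List ℕ} (hs : l.Pairwise (· ≥ ·)) (i j : ℕ) :
    j < part l i ↔ i < conjPart l j := by
  induction l generalizing i with
  | nil => simp [part, conjPart]
  | cons a t ih =>
    rw [List.pairwise_cons] at hs
    obtain ⟨ha, hst⟩ := hs
    by_cases hja : j < a
    · have hc : conjPart (a :: t) j = conjPart t j + 1 := by
        simp [conjPart, List.filter_cons, hja]
      cases i with
      | zero => simp [part, hc, hja]
      | succ i =>
        have hpart : part (a :: t) (i+1) = part t i := by simp [part]
        rw [hpart, hc, Nat.succ_lt_succ_iff]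
        exact ih hst i
    · have hc : conjPart (a :: t) j = 0 := by
        unfold conjPart
        rw [List.filter_eq_nil_iff.mpr, List.length_nil]
        intro b hb
        rcases List.mem_cons.mp hb with rfl | hbt
        · simpa using hja
        · have : b ≤ a := ha b hbt
          simp; omega
      rw [hc]
      have hle : part (a :: t) i ≤ a := by
        apply part_le_of_forall
        intro b hb
        rcases List.mem_cons.mp hb with rfl | hbt
        · exact le_refl _
        · exact ha b hbt
      constructor
      · intro hcon; omega
      · intro hcon; omega

lemma conjPart_zero {l : List ℕ} (hl : IsPartition l) : conjPart l 0 = l.length := by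
  unfold conjPart
  rw [List.filter_eq_self.mpr]
  intro a ha
  simpa using hl.2 a ha

lemma bar_part {l : List ℕ} (hs : l.Pairwise (· ≥ ·)) (i : ℕ) : part (bar l) i = part l i - 1 := by
  induction l generalizing i with
  | nil => simp [bar, part]
  | cons a t ih =>
    rw [List.pairwise_cons] at hs
    obtain ⟨ha, hst⟩ := hs
    by_cases h2 : 0 < a - 1
    · have hb : bar (a :: t) = (a - 1) :: bar t := by
        simp [bar, List.filter_cons, h2]
      cases i with
      | zero => simp [hb, part]
      | succ i => rw [hb]; simpa [part] using ih hst i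
    · have hb : bar (a :: t) = bar t := by
        simp [bar, List.filter_cons, h2]
      have hta : ∀ b ∈ t, b ≤ 1 := fun b hb' => by have := ha b hb'; omega
      rw [hb]
      cases i with
      | zero =>
        have h1 := part_le_of_forall hta 0
        have h3 := ih hst 0
        have : part (a :: t) 0 = a := by simp [part]
        omega
      | succ i =>
        have h1 := part_le_of_forall hta (i+1)
        have h2' := part_le_of_forall hta i
        have h3 := ih hst (i+1)
        have : part (a :: t) (i+1) = part t i := by simp [part]
        omega

lemma bar_conjPart (l : List ℕ) (j : ℕ) : conjPart (bar l) j = conjPart l (j+1) := by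
  unfold conjPart bar
  rw [List.filter_filter, ← List.countP_eq_length_filter, ← List.countP_eq_length_filter,
    List.countP_map]
  apply List.countP_congr
  intro a _
  simp only [Function.comp_apply, Bool.and_eq_true, decide_eq_true_eq, Bool.decide_and]
  rcases Nat.lt_or_ge a 1 with h | h
  · simp; omega
  · simp; omega

lemma bar_isPartition {l : List ℕ} (hl : IsPartition l) : IsPartition (bar l) := by
  constructor
  · exact List.Pairwise.filter _ (List.Pairwise.map _ (fun a b h => Nat.sub_le_sub_right h 1) hl.1)
  · intro p hp
    simpa using (List.mem_filter.mp hp).2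

lemma bar_length_le (l : List ℕ) : (bar l).length ≤ l.length :=
  le_trans (List.length_filter_le _ _) (by rw [List.length_map])

lemma part_ext {l m : List ℕ} (hl : IsPartition l) (hm : IsPartition m)
    (h : ∀ i, part l i = part m i) : l = m := by
  have h1 : ∀ i, i < l.length ↔ i < m.length := fun i => by
    rw [part_pos hl, part_pos hm, h]
  have hlen : l.length = m.length := by
    have := h1 l.length; have := h1 m.length; omega
  exact List.ext_getElem hlen (fun i hi1 hi2 => by
    rw [← part_eq_getElem hi1, ← part_eq_getElem hi2, h])

lemma rn_length (n : ℕ) (l : List ℕ) : (rn n l).length = n + (l.length - (n+1)) := by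
  simp [rn]

lemma getD_drop (l : List ℕ) (k m : ℕ) : (l.drop k).getD m 0 = l.getD (k + m) 0 := by
  by_cases h : m < (l.drop k).length
  · rw [List.getD_eq_getElem _ _ h, List.getD_eq_getElem _ _ (by simp at h ⊢; omega),
      List.getElem_drop]
  · rw [List.getD_eq_default _ _ (le_of_not_gt h),
      List.getD_eq_default _ _ (by simp at h; omega)]

lemma part_rn_lt {n : ℕ} {l : List ℕ} {i : ℕ} (h : i < n) : part (rn n l) i = part l i + 1 := by
  unfold rn part
  rw [List.getD_append _ _ _ _ (by simp [h])]
  rw [List.getD_eq_getElem _ _ (by simp [h])]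
  simp [h]

lemma part_rn_ge {n : ℕ} {l : List ℕ} {i : ℕ} (h : n ≤ i) :
    part (rn n l) i = part l (i+1) := by
  unfold rn part
  rw [List.getD_append_right _ _ _ _ (by simp [h])]
  simp only [List.length_map, List.length_range]
  rw [getD_drop]
  congr 1
  omega

lemma rn_isPartition {l : List ℕ} (hl : IsPartition l) (n : ℕ) : IsPartition (rn n l) := by
  constructor
  · rw [List.pairwise_iff_getElem]
    intro i j hi hj hij
    show (rn n l)[i] ≥ (rn n l)[j]
    rw [← part_eq_getElem hi, ← part_eq_getElem hj]
    by_cases hin : i < n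
    · by_cases hjn : j < n
      · rw [part_rn_lt hin, part_rn_lt hjn]
        exact Nat.succ_le_succ (part_antitone hl.1 (le_of_lt hij))
      · rw [part_rn_lt hin, part_rn_ge (le_of_not_gt hjn)]
        have := part_antitone hl.1 (show i ≤ j+1 by omega)
        omega
    · have hjn : ¬ j < n := by omega
      rw [part_rn_ge (le_of_not_gt hin), part_rn_ge (le_of_not_gt hjn)]
      exact part_antitone hl.1 (by omega)
  · intro p hp
    rcases List.mem_append.mp hp with h | h
    · obtain ⟨i, _, rfl⟩ := List.mem_map.mp h
      exact Nat.succ_pos _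
    · exact hl.2 _ (List.mem_of_mem_drop h)

lemma bar_rn_eq {l : List ℕ} (hl : IsPartition l) {n : ℕ} (h : l.length ≤ n) :
    bar (rn n l) = l := by
  apply part_ext (bar_isPartition (rn_isPartition hl n)) hl
  intro i
  rw [bar_part (rn_isPartition hl n).1]
  by_cases hin : i < n
  · rw [part_rn_lt hin]; omega
  · rw [part_rn_ge (le_of_not_gt hin)]
    have h1 : part l (i+1) = 0 := part_eq_zero (by omega)
    have h2 : part l i = 0 := part_eq_zero (by omega)
    omega

-- tilde lemmas, case n ≥ ℓ
lemma tilde_length {l : List ℕ} {n : ℕ} (h : l.length ≤ n) :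
    (l ++ List.replicate (n - l.length + 1) 1).length = n + 1 := by
  simp; omega

lemma part_tilde_lt {l : List ℕ} {n i : ℕ} (hi : i < l.length) :
    part (l ++ List.replicate (n - l.length + 1) 1) i = part l i := by
  unfold part
  rw [List.getD_append _ _ _ _ hi]

lemma part_tilde_mid {l : List ℕ} {n i : ℕ} (h : l.length ≤ n) (hi : l.length ≤ i)
    (hi2 : i < n + 1) : part (l ++ List.replicate (n - l.length + 1) 1) i = 1 := by
  unfold part
  rw [List.getD_append_right _ _ _ _ hi]
  rw [List.getD_eq_getElem _ _ (by simp; omega)]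
  rw [List.getElem_replicate]

lemma tilde_isPartition {l : List ℕ} {n : ℕ} (hl : IsPartition l) :
    IsPartition (l ++ List.replicate (n - l.length + 1) 1) := by
  constructor
  · rw [List.pairwise_append]
    refine ⟨hl.1, ?_, ?_⟩
    · exact List.pairwise_replicate.mpr (Or.inr (le_refl 1))
    · intro a ha b hb
      rw [List.eq_of_mem_replicate hb]
      exact hl.2 a ha
  · intro p hp
    rcases List.mem_append.mp hp with h | h
    · exact hl.2 _ h
    · rw [List.eq_of_mem_replicate h]; exact Nat.one_pos

lemma bar_tilde_eq {l : List ℕ} {n : ℕ} (hl : IsPartition l) (h : l.length ≤ n) :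
    bar (l ++ List.replicate (n - l.length + 1) 1) = bar l := by
  apply part_ext (bar_isPartition (tilde_isPartition hl)) (bar_isPartition hl)
  intro i
  rw [bar_part (tilde_isPartition hl).1, bar_part hl.1]
  by_cases hi : i < l.length
  · rw [part_tilde_lt hi]
  · have h2 : part l i = 0 := part_eq_zero (by omega)
    by_cases hi2 : i < n + 1
    · rw [part_tilde_mid h (by omega) hi2]; omega
    · rw [part_eq_zero (by rw [tilde_length h]; omega)]; omega

lemma fac_eval (q c u : ℂ) (e : ℤ) : (fac q c e).eval u = 1 - q ^ e * (c * u) := by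
  simp [fac]; ring

lemma nekP_eval (q c u : ℂ) (A B : List ℕ) : (nekP q c A B).eval u = nek q (c * u) A B := by
  simp [nekP, nek, eval_prod, fac_eval]

lemma fac_shift {q : ℂ} (hq : q ≠ 0) (c : ℂ) (e : ℤ) : fac q (c * q⁻¹) e = fac q c (e - 1) := by
  unfold fac
  have : q ^ e * (c * q⁻¹) = q ^ (e - 1) * c := by
    rw [zpow_sub_one₀ hq]; ring
  rw [this]

lemma fac_qscale {q : ℂ} (hq : q ≠ 0) (e : ℤ) : fac q q e = fac q 1 (e + 1) := by
  unfold fac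
  have : q ^ e * q = q ^ (e + 1) * 1 := by rw [zpow_add_one₀ hq]; ring
  rw [this]

lemma fac_zero (q : ℂ) : fac q 1 0 = 1 - Polynomial.X := by
  simp [fac]

lemma fac_eval_zero (q c : ℂ) (e : ℤ) : (fac q c e).eval 0 = 1 := by simp [fac]

lemma prod_rowcol {mu : List ℕ} (hmu : IsPartition mu) (L : ℕ) (f : ℕ → ℕ → Polynomial ℂ) :
    ∏ i ∈ Ico L mu.length, ∏ j ∈ range (part mu i), f i j
      = ∏ j ∈ range (part mu L), ∏ i ∈ Ico L (conjPart mu j), f i j := by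
  apply Finset.prod_comm'
  intro i j
  simp only [mem_Ico, mem_range]
  constructor
  · rintro ⟨⟨h1, h2⟩, h3⟩
    exact ⟨⟨h1, (lt_part_iff hmu.1 i j).mp h3⟩, lt_of_lt_of_le h3 (part_antitone hmu.1 h1)⟩
  · rintro ⟨⟨h1, h2⟩, h3⟩
    exact ⟨⟨h1, lt_of_lt_of_le h2 (conjPart_le_length mu j)⟩, (lt_part_iff hmu.1 i j).mpr h2⟩

lemma filter_not_lt_eq_Ico (M L : ℕ) :
    (range M).filter (fun i => ¬ i < L) = Ico L M := by
  ext x; simp [Finset.mem_Ico]; omega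

set_option maxHeartbeats 1000000 in
lemma claim1 (q c : ℂ) (hq : q ≠ 0) (mu B : List ℕ) (hmu : IsPartition mu)
    (hB : IsPartition B) :
    nekP q c mu B * DD q c mu B.length
      = nekP q (c * q⁻¹) mu (bar B) * NN q c mu B.length := by
  have hA :
      (∏ i ∈ range mu.length, ∏ j ∈ range (part mu i),
          fac q c (-((conjPart mu j : ℤ) - ((i : ℤ) + 1)) - ((part B i : ℤ) - ((j : ℤ) + 1)) - 1))
        * DD q c mu B.length
      = (∏ i ∈ range mu.length, ∏ j ∈ range (part mu i),
          fac q (c * q⁻¹)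
            (-((conjPart mu j : ℤ) - ((i : ℤ) + 1)) - ((part (bar B) i : ℤ) - ((j : ℤ) + 1)) - 1))
        * ∏ j ∈ range (part mu B.length), fac q c (j : ℤ) := by
    have hsplit : ∀ G : ℕ → Polynomial ℂ,
        ∏ i ∈ range mu.length, G i
          = (∏ i ∈ (range mu.length).filter (fun i => i < B.length), G i) * ∏ i ∈ Ico B.length mu.length, G i := by
      intro G
      rw [← Finset.prod_filter_mul_prod_filter_not (range mu.length) (fun i => i < B.length) G,
        filter_not_lt_eq_Ico]
    rw [hsplit, hsplit]
    -- heads are equal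
    have hhead :
        (∏ i ∈ (range mu.length).filter (fun i => i < B.length), ∏ j ∈ range (part mu i),
          fac q (c * q⁻¹)
            (-((conjPart mu j : ℤ) - ((i : ℤ) + 1)) - ((part (bar B) i : ℤ) - ((j : ℤ) + 1)) - 1))
        = ∏ i ∈ (range mu.length).filter (fun i => i < B.length), ∏ j ∈ range (part mu i),
            fac q c (-((conjPart mu j : ℤ) - ((i : ℤ) + 1)) - ((part B i : ℤ) - ((j : ℤ) + 1)) - 1) := by
      apply Finset.prod_congr rfl
      intro i hi
      have hiL : i < B.length := (Finset.mem_filter.mp hi).2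
      have hpos : 0 < part B i := (part_pos hB).mp hiL
      apply Finset.prod_congr rfl
      intro j _
      rw [fac_shift hq, bar_part hB.1]
      congr 1
      omega
    rw [hhead]
    -- tails: convert to columns and telescope
    have htail1 :
        (∏ i ∈ Ico B.length mu.length, ∏ j ∈ range (part mu i),
          fac q c (-((conjPart mu j : ℤ) - ((i : ℤ) + 1)) - ((part B i : ℤ) - ((j : ℤ) + 1)) - 1))
        = ∏ j ∈ range (part mu B.length), ∏ i ∈ Ico B.length (conjPart mu j),
            fac q c ((i : ℤ) + (j : ℤ) + 1 - (conjPart mu j : ℤ)) := by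
      rw [prod_rowcol hmu]
      apply Finset.prod_congr rfl
      intro j _
      apply Finset.prod_congr rfl
      intro i hi
      have hBi : part B i = 0 := part_eq_zero (Finset.mem_Ico.mp hi).1
      rw [hBi]
      congr 1
      push_cast
      ring
    have htail0 :
        (∏ i ∈ Ico B.length mu.length, ∏ j ∈ range (part mu i),
          fac q (c * q⁻¹)
            (-((conjPart mu j : ℤ) - ((i : ℤ) + 1)) - ((part (bar B) i : ℤ) - ((j : ℤ) + 1)) - 1))
        = ∏ j ∈ range (part mu B.length), ∏ i ∈ Ico B.length (conjPart mu j),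
            fac q c ((i : ℤ) + (j : ℤ) - (conjPart mu j : ℤ)) := by
      rw [prod_rowcol hmu]
      apply Finset.prod_congr rfl
      intro j _
      apply Finset.prod_congr rfl
      intro i hi
      have hBi : part (bar B) i = 0 :=
        part_eq_zero (le_trans (bar_length_le B) (Finset.mem_Ico.mp hi).1)
      rw [fac_shift hq, hBi]
      congr 1
      push_cast
      ring
    rw [htail1, htail0, DD, mul_assoc, mul_assoc, ← Finset.prod_mul_distrib,
      ← Finset.prod_mul_distrib]
    refine congrArg (HMul.hMul _) ?_
    apply Finset.prod_congr rfl
    intro j hj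
    have hQ : B.length < conjPart mu j := (lt_part_iff hmu.1 B.length j).mp (mem_range.mp hj)
    have hstep :
        (∏ i ∈ Ico B.length (conjPart mu j), fac q c ((i : ℤ) + (j : ℤ) + 1 - (conjPart mu j : ℤ)))
        = ∏ i ∈ Ico (B.length + 1) (conjPart mu j + 1),
            fac q c ((i : ℤ) + (j : ℤ) - (conjPart mu j : ℤ)) := by
      rw [Finset.prod_Ico_eq_prod_range, Finset.prod_Ico_eq_prod_range]
      rw [Nat.succ_sub_succ]
      apply Finset.prod_congr rfl
      intro k _
      congr 1
      push_cast
      ring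
    rw [hstep]
    have hbot := Finset.prod_eq_prod_Ico_succ_bot
      (show B.length < conjPart mu j + 1 by omega)
      (fun i => fac q c ((i : ℤ) + (j : ℤ) - (conjPart mu j : ℤ)))
    have htop := Finset.prod_Ico_succ_top (le_of_lt hQ)
      (fun i => fac q c ((i : ℤ) + (j : ℤ) - (conjPart mu j : ℤ)))
    have hjfac : fac q c ((conjPart mu j : ℤ) + (j : ℤ) - (conjPart mu j : ℤ)) = fac q c (j : ℤ) := by
      congr 1; ring
    calc (∏ i ∈ Ico (B.length + 1) (conjPart mu j + 1),
            fac q c ((i : ℤ) + (j : ℤ) - (conjPart mu j : ℤ)))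
          * fac q c ((B.length : ℤ) + (j : ℤ) - (conjPart mu j : ℤ))
        = ∏ i ∈ Ico B.length (conjPart mu j + 1),
            fac q c ((i : ℤ) + (j : ℤ) - (conjPart mu j : ℤ)) := by
          rw [hbot]; ring
      _ = (∏ i ∈ Ico B.length (conjPart mu j), fac q c ((i : ℤ) + (j : ℤ) - (conjPart mu j : ℤ)))
            * fac q c (j : ℤ) := by
          rw [htop, hjfac]
  
  have hB2 :
      (∏ i ∈ range B.length, ∏ j ∈ range (part B i),
          fac q c (((conjPart B j : ℤ) - ((i : ℤ) + 1)) + ((part mu i : ℤ) - ((j : ℤ) + 1)) + 1))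
      = (∏ i ∈ range B.length, fac q c ((B.length : ℤ) + part mu i - i - 1)) *
        ∏ i ∈ range (bar B).length, ∏ j ∈ range (part (bar B) i),
          fac q (c * q⁻¹)
            (((conjPart (bar B) j : ℤ) - ((i : ℤ) + 1)) + ((part mu i : ℤ) - ((j : ℤ) + 1)) + 1) := by
    have hext :
        (∏ i ∈ range (bar B).length, ∏ j ∈ range (part (bar B) i),
          fac q (c * q⁻¹)
            (((conjPart (bar B) j : ℤ) - ((i : ℤ) + 1)) + ((part mu i : ℤ) - ((j : ℤ) + 1)) + 1))
        = ∏ i ∈ range B.length, ∏ j ∈ range (part B i - 1),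
            fac q c (((conjPart B (j+1) : ℤ) - ((i : ℤ) + 1)) + ((part mu i : ℤ) - ((j : ℤ) + 1))) := by
      refine (Finset.prod_subset (Finset.range_subset_range.mpr (bar_length_le B)) ?_).trans ?_
      · intro i _ hi
        have h0 : part (bar B) i = 0 :=
          part_eq_zero (le_of_not_gt (fun hlt => hi (Finset.mem_range.mpr hlt)))
        rw [h0]
        exact Finset.prod_range_zero _
      · apply Finset.prod_congr rfl
        intro i _
        rw [bar_part hB.1]
        apply Finset.prod_congr rfl
        intro j _
        rw [bar_conjPart, fac_shift hq]
        congr 1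
        ring
    rw [hext, ← Finset.prod_mul_distrib]
    apply Finset.prod_congr rfl
    intro i hi
    have hpos : 0 < part B i := (part_pos hB).mp (mem_range.mp hi)
    obtain ⟨m, hm⟩ : ∃ m, part B i = m + 1 := ⟨part B i - 1, by omega⟩
    rw [hm, Finset.prod_range_succ']
    rw [mul_comm]
    congr 1
    · rw [conjPart_zero hB]
      congr 1
      push_cast
      ring
    · have hm1 : m + 1 - 1 = m := by omega
      rw [hm1]
      apply Finset.prod_congr rfl
      intro j _
      congr 1
      push_cast
      ring
  have assemble : ∀ {p1 p2 d p1' p2' n1 n2 : Polynomial ℂ},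
      p1 * d = p1' * n2 → p2 = n1 * p2' → (p1 * p2) * d = (p1' * p2') * (n1 * n2) := by
    intro p1 p2 d p1' p2' n1 n2 h1 h2
    calc (p1 * p2) * d = (p1 * d) * p2 := by ring
      _ = (p1' * n2) * (n1 * p2') := by rw [h1, h2]
      _ = (p1' * p2') * (n1 * n2) := by ring
  unfold nekP NN
  exact assemble hA hB2

set_option maxHeartbeats 1000000 in
lemma e1 (q : ℂ) (hq : q ≠ 0) (mu : List ℕ) (hmu : IsPartition mu) (K : ℕ) :
    NN q 1 mu (K + 1) * DD q q mu K
      = (1 - Polynomial.X) * (NN q q mu K * DD q 1 mu (K + 1)) := by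
  unfold NN DD
  push_cast
  set a := part mu K with ha
  set b := part mu (K + 1) with hb
  have hba : b ≤ a := part_antitone hmu.1 (by omega)
  -- rewrite all scale-q factors to scale-1
  have hNq : (∏ i ∈ range K, fac q q ((K : ℤ) + part mu i - i - 1))
      = ∏ i ∈ range K, fac q 1 (((K : ℤ) + 1) + part mu i - i - 1) := by
    apply Finset.prod_congr rfl
    intro i _
    rw [fac_qscale hq]
    congr 1
    ring
  have hN2q : (∏ j ∈ range a, fac q q (j : ℤ)) = ∏ j ∈ range a, fac q 1 ((j : ℤ) + 1) :=
    Finset.prod_congr rfl (fun j _ => fac_qscale hq (j : ℤ))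
  have hDq : (∏ j ∈ range a, fac q q ((K : ℤ) + j - conjPart mu j))
      = ∏ j ∈ range a, fac q 1 (((K : ℤ) + 1) + j - conjPart mu j) := by
    apply Finset.prod_congr rfl
    intro j _
    rw [fac_qscale hq]
    congr 1
    ring
  rw [hNq, hN2q, hDq]
  -- split the (K+1)-row product
  rw [Finset.prod_range_succ]
  have hlast : fac q 1 (((K : ℤ) + 1) + part mu K - K - 1) = fac q 1 (a : ℤ) := by
    rw [← ha]; congr 1; ring
  rw [hlast]
  -- split D(q) over range a into range b and Ico b a, where conjPart = K+1
  have hsplitD : (∏ j ∈ range a, fac q 1 (((K : ℤ) + 1) + j - conjPart mu j))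
      = (∏ j ∈ range b, fac q 1 (((K : ℤ) + 1) + j - conjPart mu j))
        * ∏ j ∈ Ico b a, fac q 1 (j : ℤ) := by
    rw [← Finset.prod_range_mul_prod_Ico _ hba]
    congr 1
    apply Finset.prod_congr rfl
    intro j hj
    obtain ⟨hj1, hj2⟩ := Finset.mem_Ico.mp hj
    have h1 : K < conjPart mu j := (lt_part_iff hmu.1 K j).mp (ha ▸ hj2)
    have h2 : ¬ (K + 1 < conjPart mu j) := fun hc => by
      have := (lt_part_iff hmu.1 (K+1) j).mpr hc
      omega
    have hQ : conjPart mu j = K + 1 := by omega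
    rw [hQ]
    congr 1
    push_cast
    ring
  rw [hsplitD]
  -- core identity: fac1 a * ∏_{j<b} fac1 j * ∏_{Ico b a} fac1 j = (1-X) * ∏_{j<a} fac1 (j+1)
  have hcore : fac q 1 (a : ℤ) * ((∏ j ∈ range b, fac q 1 (j : ℤ)) * ∏ j ∈ Ico b a, fac q 1 (j : ℤ))
      = (1 - Polynomial.X) * ∏ j ∈ range a, fac q 1 ((j : ℤ) + 1) := by
    rw [Finset.prod_range_mul_prod_Ico _ hba]
    have h1 : (∏ j ∈ range a, fac q 1 (j : ℤ)) * fac q 1 (a : ℤ)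
        = ∏ j ∈ range (a + 1), fac q 1 (j : ℤ) := by
      rw [Finset.prod_range_succ]
    have h2 : ∏ j ∈ range (a + 1), fac q 1 (j : ℤ)
        = (∏ j ∈ range a, fac q 1 ((j : ℤ) + 1)) * (1 - Polynomial.X) := by
      rw [Finset.prod_range_succ']
      rw [show ((0 : ℕ) : ℤ) = 0 by norm_num, fac_zero]
      apply congrArg (· * (1 - Polynomial.X))
      apply Finset.prod_congr rfl
      intro j _
      rw [Nat.cast_add, Nat.cast_one]
    calc fac q 1 (a:ℤ) * ∏ j ∈ range a, fac q 1 (j : ℤ)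
        = (∏ j ∈ range a, fac q 1 (j : ℤ)) * fac q 1 (a:ℤ) := by ring
      _ = (∏ j ∈ range a, fac q 1 ((j : ℤ) + 1)) * (1 - Polynomial.X) := by rw [h1, h2]
      _ = (1 - Polynomial.X) * ∏ j ∈ range a, fac q 1 ((j : ℤ) + 1) := by ring
  calc (∏ i ∈ range K, fac q 1 ((K:ℤ)+1 + part mu i - i - 1)) * fac q 1 (a:ℤ)
        * (∏ j ∈ range b, fac q 1 (j:ℤ))
        * ((∏ j ∈ range b, fac q 1 ((K:ℤ)+1 + j - conjPart mu j)) * ∏ j ∈ Ico b a, fac q 1 (j:ℤ))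
      = ((∏ i ∈ range K, fac q 1 ((K:ℤ)+1 + part mu i - i - 1))
          * (∏ j ∈ range b, fac q 1 ((K:ℤ)+1 + j - conjPart mu j)))
        * (fac q 1 (a:ℤ) * ((∏ j ∈ range b, fac q 1 (j:ℤ)) * ∏ j ∈ Ico b a, fac q 1 (j:ℤ))) := by
        ring
    _ = ((∏ i ∈ range K, fac q 1 ((K:ℤ)+1 + part mu i - i - 1))
          * (∏ j ∈ range b, fac q 1 ((K:ℤ)+1 + j - conjPart mu j)))
        * ((1 - Polynomial.X) * ∏ j ∈ range a, fac q 1 ((j:ℤ) + 1)) := by rw [hcore]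
    _ = (1 - Polynomial.X) * ((∏ i ∈ range K, fac q 1 ((K:ℤ)+1 + part mu i - i - 1))
          * (∏ j ∈ range a, fac q 1 ((j:ℤ)+1))
          * (∏ j ∈ range b, fac q 1 ((K:ℤ)+1 + j - conjPart mu j))) := by ring


theorem stmt17 (q : ℂ) (hq : q ≠ 0)
    (lam mu : List ℕ) (hlam : IsPartition lam) (hmu : IsPartition mu) (n : ℕ) (u : ℂ) :
    let eta := rn n lam
    let tilde := if n < lam.length then bar eta
                 else lam ++ List.replicate (n - lam.length + 1) 1
    nek q u mu lam * nek q u mu tilde =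
      (1 - u) * nek q (q⁻¹ * u) mu (bar lam) * nek q (q * u) mu eta := by
  intro eta tilde
  have heta : eta = rn n lam := rfl
  have hE : IsPartition (rn n lam) := rn_isPartition hlam n
  by_cases hn : n < lam.length
  · -- case n < ℓ
    have ht : tilde = bar (rn n lam) := if_pos hn
    have hElen : (rn n lam).length = lam.length - 1 := by rw [rn_length]; omega
    have C1 := claim1 q 1 hq mu lam hmu hlam
    rw [one_mul] at C1
    have C2 := claim1 q q hq mu (rn n lam) hmu hE
    rw [mul_inv_cancel₀ hq, hElen] at C2
    have E1 := e1 q hq mu hmu (lam.length - 1)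
    have hL : lam.length - 1 + 1 = lam.length := by omega
    rw [hL] at E1
    have hZ : DD q 1 mu lam.length * NN q q mu (lam.length - 1) ≠ 0 := by
      intro h
      have h0 : (DD q 1 mu lam.length * NN q q mu (lam.length - 1)).eval 0 = 1 := by
        simp [DD, NN, fac, Polynomial.eval_prod]
      rw [h] at h0
      simp at h0
    have key : nekP q 1 mu lam * nekP q 1 mu (bar (rn n lam))
        = (1 - Polynomial.X) * nekP q q⁻¹ mu (bar lam) * nekP q q mu (rn n lam) := by
      apply mul_right_cancel₀ hZ
      calc (nekP q 1 mu lam * nekP q 1 mu (bar (rn n lam)))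
            * (DD q 1 mu lam.length * NN q q mu (lam.length - 1))
          = (nekP q 1 mu lam * DD q 1 mu lam.length)
            * (nekP q 1 mu (bar (rn n lam)) * NN q q mu (lam.length - 1)) := by ring
        _ = (nekP q q⁻¹ mu (bar lam) * NN q 1 mu lam.length)
            * (nekP q q mu (rn n lam) * DD q q mu (lam.length - 1)) := by rw [C1, ← C2]
        _ = (nekP q q⁻¹ mu (bar lam) * nekP q q mu (rn n lam))
            * (NN q 1 mu lam.length * DD q q mu (lam.length - 1)) := by ring
        _ = (nekP q q⁻¹ mu (bar lam) * nekP q q mu (rn n lam))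
            * ((1 - Polynomial.X) * (NN q q mu (lam.length - 1) * DD q 1 mu lam.length)) := by
            rw [E1]
        _ = ((1 - Polynomial.X) * nekP q q⁻¹ mu (bar lam) * nekP q q mu (rn n lam))
            * (DD q 1 mu lam.length * NN q q mu (lam.length - 1)) := by ring
    have hkey := congrArg (Polynomial.eval u) key
    simp only [Polynomial.eval_mul, nekP_eval, Polynomial.eval_sub, Polynomial.eval_one,
      Polynomial.eval_X, one_mul] at hkey
    rw [ht, heta]
    exact hkey
  · -- case n ≥ ℓ
    have hn' : lam.length ≤ n := le_of_not_gt hn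
    have ht : tilde = lam ++ List.replicate (n - lam.length + 1) 1 := if_neg hn
    have hElen : (rn n lam).length = n := by rw [rn_length]; omega
    have hT : IsPartition (lam ++ List.replicate (n - lam.length + 1) 1) :=
      tilde_isPartition hlam
    have C1 := claim1 q q hq mu (rn n lam) hmu hE
    rw [mul_inv_cancel₀ hq, hElen, bar_rn_eq hlam hn'] at C1
    have C2 := claim1 q 1 hq mu (lam ++ List.replicate (n - lam.length + 1) 1) hmu hT
    rw [one_mul, tilde_length hn', bar_tilde_eq hlam hn'] at C2
    have E1 := e1 q hq mu hmu n
    have hZ : NN q q mu n * DD q 1 mu (n + 1) ≠ 0 := by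
      intro h
      have h0 : (NN q q mu n * DD q 1 mu (n + 1)).eval 0 = 1 := by
        simp [DD, NN, fac, Polynomial.eval_prod]
      rw [h] at h0
      simp at h0
    have key : nekP q 1 mu lam * nekP q 1 mu (lam ++ List.replicate (n - lam.length + 1) 1)
        = (1 - Polynomial.X) * nekP q q⁻¹ mu (bar lam) * nekP q q mu (rn n lam) := by
      apply mul_right_cancel₀ hZ
      calc (nekP q 1 mu lam * nekP q 1 mu (lam ++ List.replicate (n - lam.length + 1) 1))
            * (NN q q mu n * DD q 1 mu (n + 1))
          = (nekP q 1 mu lam * NN q q mu n)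
            * (nekP q 1 mu (lam ++ List.replicate (n - lam.length + 1) 1)
                * DD q 1 mu (n + 1)) := by ring
        _ = (nekP q q mu (rn n lam) * DD q q mu n)
            * (nekP q q⁻¹ mu (bar lam) * NN q 1 mu (n + 1)) := by rw [← C1, C2]
        _ = (nekP q q⁻¹ mu (bar lam) * nekP q q mu (rn n lam))
            * (NN q 1 mu (n + 1) * DD q q mu n) := by ring
        _ = (nekP q q⁻¹ mu (bar lam) * nekP q q mu (rn n lam))
            * ((1 - Polynomial.X) * (NN q q mu n * DD q 1 mu (n + 1))) := by rw [E1]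
        _ = ((1 - Polynomial.X) * nekP q q⁻¹ mu (bar lam) * nekP q q mu (rn n lam))
            * (NN q q mu n * DD q 1 mu (n + 1)) := by ring
    have hkey := congrArg (Polynomial.eval u) key
    simp only [Polynomial.eval_mul, nekP_eval, Polynomial.eval_sub, Polynomial.eval_one,
      Polynomial.eval_X, one_mul] at hkey
    rw [ht, heta]
    exact hkey
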